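/- Let γ₁, γ₂ ∈ [0,1] and let ε_AD be the two-qubit amplitude damping channel with Kraus operators K_{ab} = M_a^{(γ₁)} ⊗ M_b^{(γ₂)} (a,b ∈ {0,1}), where M₀^{(γ)} = diag(1, √(1−γ)) and M₁^{(γ)} = [[0, √γ],[0,0]]. Then the l₁-norm imaginarity decay of the maximal imaginary state satisfies F_{l₁}(M₊ ⊗ M₊) − F_{l₁}(ε_AD(M₊ ⊗ M₊)) = 2 − √(1−γ₁) − √(1−γ₂). -/

import Mathlib

open Matrix Kronecker BigOperators
open scoped ComplexOrder

noncomputable section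

/-- A density matrix: positive semidefinite with trace 1. -/
def IsDensityMatrix {n : Type*} [Fintype n] [DecidableEq n] (ρ : Matrix n n ℂ) : Prop :=
  ρ.PosSemidef ∧ ρ.trace = 1

/-- The l₁-norm imaginarity measure: sum of |Im ρᵢⱼ| over off-diagonal entries. -/
noncomputable def Fl1 {n : Type*} [Fintype n] [DecidableEq n] (ρ : Matrix n n ℂ) : ℝ :=
  ∑ i, ∑ j, if i = j then 0 else |(ρ i j).im|

/-- The trace norm ‖M‖₁ = Tr √(M†M). -/
noncomputable def traceNorm {n : Type*} [Fintype n] [DecidableEq n] (M : Matrix n n ℂ) : ℝ :=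
  (((Matrix.posSemidef_conjTranspose_mul_self M).1.eigenvectorUnitary : Matrix n n ℂ) *
    diagonal (fun i => ((Real.sqrt ((Matrix.posSemidef_conjTranspose_mul_self M).1.eigenvalues i) : ℝ) : ℂ)) *
    (star (Matrix.posSemidef_conjTranspose_mul_self M).1.eigenvectorUnitary : Matrix n n ℂ)).trace.re

/-- The robustness of imaginarity: (1/2)‖ρ − ρᵀ‖₁. -/
noncomputable def FR {n : Type*} [Fintype n] [DecidableEq n] (ρ : Matrix n n ℂ) : ℝ :=
  traceNorm (ρ - ρᵀ) / 2

/-- Von Neumann entropy (base-2), via eigenvalues of a Hermitian matrix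
(junk value 0 if not Hermitian). -/
noncomputable def vnEntropy {n : Type*} [Fintype n] [DecidableEq n] (σ : Matrix n n ℂ) : ℝ :=
  if h : σ.IsHermitian then -∑ j, (h.eigenvalues j) * Real.logb 2 (h.eigenvalues j) else 0

/-- The relative entropy of imaginarity: S(Re ρ) − S(ρ), Re ρ = (ρ + ρᵀ)/2. -/
noncomputable def Fr {n : Type*} [Fintype n] [DecidableEq n] (ρ : Matrix n n ℂ) : ℝ :=
  vnEntropy ((1/2 : ℂ) • (ρ + ρᵀ)) - vnEntropy ρ

/-- The canonical single-qubit state ρ_A. -/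
noncomputable def rhoA (A : ℝ) : Matrix (Fin 2) (Fin 2) ℂ :=
  !![(((1 + A) / 2 : ℝ) : ℂ), -(Complex.I / 2) * (Real.sqrt (1 - A ^ 2) : ℂ);
     (Complex.I / 2) * (Real.sqrt (1 - A ^ 2) : ℂ), (((1 - A) / 2 : ℝ) : ℂ)]

/-- Density matrix of the maximal imaginary state |+⟩ = (|0⟩ + i|1⟩)/√2. -/
noncomputable def Mplus : Matrix (Fin 2) (Fin 2) ℂ :=
  (1/2 : ℂ) • !![1, -Complex.I; Complex.I, 1]

/-- Single-qubit amplitude damping Kraus operators. -/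
noncomputable def adKraus (γ : ℝ) : Fin 2 → Matrix (Fin 2) (Fin 2) ℂ :=
  ![!![1, 0; 0, (Real.sqrt (1 - γ) : ℂ)], !![0, (Real.sqrt γ : ℂ); 0, 0]]

/-- The two-qubit amplitude damping channel. -/
noncomputable def ad2 (γ₁ γ₂ : ℝ) (ρ : Matrix (Fin 2 × Fin 2) (Fin 2 × Fin 2) ℂ) :
    Matrix (Fin 2 × Fin 2) (Fin 2 × Fin 2) ℂ :=
  ∑ a : Fin 2, ∑ b : Fin 2,
    (adKraus γ₁ a ⊗ₖ adKraus γ₂ b) * ρ * (adKraus γ₁ a ⊗ₖ adKraus γ₂ b)ᴴ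

noncomputable def adM (γ : ℝ) : Matrix (Fin 2) (Fin 2) ℂ :=
  !![(((1 + γ)/2 : ℝ) : ℂ), -(Complex.I/2) * (Real.sqrt (1-γ) : ℂ);
     (Complex.I/2) * (Real.sqrt (1-γ) : ℂ), (((1 - γ)/2 : ℝ) : ℂ)]

lemma ad_single (γ : ℝ) (h0 : 0 ≤ γ) (h1 : γ ≤ 1) :
    ∑ a : Fin 2, adKraus γ a * Mplus * (adKraus γ a)ᴴ = adM γ := by
  have q : Real.sqrt γ * Real.sqrt γ = γ := Real.mul_self_sqrt h0
  have q' : Real.sqrt (1-γ) * Real.sqrt (1-γ) = 1-γ := Real.mul_self_sqrt (by linarith)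
  ext i j
  fin_cases i <;> fin_cases j <;>
    simp [adKraus, Mplus, adM, Matrix.mul_apply, Matrix.conjTranspose_apply,
      Matrix.vecMul, dotProduct, Fin.sum_univ_two, Complex.ext_iff] <;>
    first
      | ring1
      | linarith [q, q']

lemma ad2_factor (γ₁ γ₂ : ℝ) (h₁0 : 0 ≤ γ₁) (h₁1 : γ₁ ≤ 1) (h₂0 : 0 ≤ γ₂) (h₂1 : γ₂ ≤ 1) :
    ad2 γ₁ γ₂ (Mplus ⊗ₖ Mplus) = adM γ₁ ⊗ₖ adM γ₂ := by
  rw [ad2, ← ad_single γ₁ h₁0 h₁1, ← ad_single γ₂ h₂0 h₂1]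
  ext ⟨i1, i2⟩ ⟨j1, j2⟩
  have key : ∀ (a b : Fin 2),
      (adKraus γ₁ a ⊗ₖ adKraus γ₂ b) * (Mplus ⊗ₖ Mplus) * (adKraus γ₁ a ⊗ₖ adKraus γ₂ b)ᴴ
        = (adKraus γ₁ a * Mplus * (adKraus γ₁ a)ᴴ) ⊗ₖ (adKraus γ₂ b * Mplus * (adKraus γ₂ b)ᴴ) := by
    intro a b
    have hct : ∀ (X Y : Matrix (Fin 2) (Fin 2) ℂ), (X ⊗ₖ Y)ᴴ = Xᴴ ⊗ₖ Yᴴ := by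
      intro X Y
      ext ⟨x1, x2⟩ ⟨y1, y2⟩
      simp [Matrix.conjTranspose_apply, Matrix.kroneckerMap_apply]
    rw [hct, ← Matrix.mul_kronecker_mul, ← Matrix.mul_kronecker_mul]
  simp only [ad2, key, Matrix.sum_apply, Matrix.kroneckerMap_apply]
  rw [← Finset.sum_mul_sum]

/-- l₁-norm de-imaginary decay of M₊ ⊗ M₊ under two-qubit amplitude
damping. -/
theorem ad2_l1_decay (γ₁ γ₂ : ℝ) (h₁0 : 0 ≤ γ₁) (h₁1 : γ₁ ≤ 1) (h₂0 : 0 ≤ γ₂) (h₂1 : γ₂ ≤ 1) :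
    Fl1 (Mplus ⊗ₖ Mplus) - Fl1 (ad2 γ₁ γ₂ (Mplus ⊗ₖ Mplus))
      = 2 - Real.sqrt (1 - γ₁) - Real.sqrt (1 - γ₂) := by
  rw [ad2_factor γ₁ γ₂ h₁0 h₁1 h₂0 h₂1]
  have s1 : (0:ℝ) ≤ Real.sqrt (1 - γ₁) := Real.sqrt_nonneg _
  have s2 : (0:ℝ) ≤ Real.sqrt (1 - γ₂) := Real.sqrt_nonneg _
  simp only [Fl1, Mplus, adM, Fintype.sum_prod_type, Fin.sum_univ_two,
    Matrix.kroneckerMap_apply, Matrix.smul_apply, smul_eq_mul, Prod.mk.injEq]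
  norm_num [Complex.ext_iff, abs_of_nonneg, s1, s2, abs_mul]
  ring_nf
  have A1 : |1/2 + γ₁*(1/2)| = 1/2 + γ₁*(1/2) := abs_of_nonneg (by linarith)
  have A2 : |1/2 + γ₁*(-1/2)| = 1/2 + γ₁*(-1/2) := abs_of_nonneg (by linarith)
  have A3 : |1/2 + γ₂*(1/2)| = 1/2 + γ₂*(1/2) := abs_of_nonneg (by linarith)
  have A4 : |1/2 + γ₂*(-1/2)| = 1/2 + γ₂*(-1/2) := abs_of_nonneg (by linarith)
  rw [A1, A2, A3, A4]
  ring
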